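/- For any orthonormal set {z, u, v, w} of vectors in ℝ^8, the octonionic triple cross product satisfies ⟨X(u,v,w), z⟩ = -⟨X(z,v,w), u⟩. -/

import Mathlib

open scoped RealInnerProductSpace

noncomputable section

abbrev Oct : Type := EuclideanSpace ℝ (Fin 8)

def octe (i : Fin 8) : Oct := EuclideanSpace.single i 1

def plusTriples : List (Fin 8 × Fin 8 × Fin 8) :=
  [(1,2,3),(1,4,5),(1,7,6),(2,4,6),(2,5,7),(3,4,7),(3,6,5)]

/-- Completely skew-symmetric structure tensor taking the value `+1` on the
triples 123, 145, 176, 246, 257, 347, 365. -/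
def eps (i j k : Fin 8) : ℝ :=
  if plusTriples.any (fun t => decide ((i,j,k) = t ∨ (i,j,k) = (t.2.1, t.2.2, t.1) ∨
      (i,j,k) = (t.2.2, t.1, t.2.1))) then 1
  else if plusTriples.any (fun t => decide ((i,j,k) = (t.1, t.2.2, t.2.1) ∨
      (i,j,k) = (t.2.2, t.2.1, t.1) ∨ (i,j,k) = (t.2.1, t.1, t.2.2))) then -1
  else 0

/-- Structure constants of octonion multiplication:
`e_0 e_i = e_i e_0 = e_i` and `e_i e_j = -δ_ij e_0 + ε_ijk e_k` for `i,j ≥ 1`. -/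
def structC (i j k : Fin 8) : ℝ :=
  if i = 0 then (if j = k then 1 else 0)
  else if j = 0 then (if i = k then 1 else 0)
  else (if i = j ∧ k = 0 then (-1:ℝ) else 0) + eps i j k

/-- Octonion multiplication on ℝ⁸. -/
def octMul (x y : Oct) : Oct := WithLp.toLp 2 (fun k => ∑ i, ∑ j, x i * y j * structC i j k)

/-- Octonionic conjugation. -/
def octConj (x : Oct) : Oct := WithLp.toLp 2 (fun k => if k = 0 then x 0 else -(x k))

/-- The triple cross product `X(u,v,w) = -u(v̄w) + ⟨u,v⟩w + ⟨v,w⟩u - ⟨w,u⟩v`. -/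
def X3 (u v w : Oct) : Oct :=
  -octMul u (octMul (octConj v) w) + ⟪u, v⟫ • w + ⟪v, w⟫ • u - ⟪w, u⟫ • v

/-- The double cross product `u × v = uv + ⟨u,v⟩ e_0` (on imaginary octonions). -/
def cross2 (u v : Oct) : Oct := octMul u v + ⟪u, v⟫ • octe 0


def epsZ (i j k : Fin 8) : ℤ :=
  if plusTriples.any (fun t => decide ((i,j,k) = t ∨ (i,j,k) = (t.2.1, t.2.2, t.1) ∨
      (i,j,k) = (t.2.2, t.1, t.2.1))) then 1
  else if plusTriples.any (fun t => decide ((i,j,k) = (t.1, t.2.2, t.2.1) ∨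
      (i,j,k) = (t.2.2, t.2.1, t.1) ∨ (i,j,k) = (t.2.1, t.1, t.2.2))) then -1
  else 0

def structCZ (i j k : Fin 8) : ℤ :=
  if i = 0 then (if j = k then 1 else 0)
  else if j = 0 then (if i = k then 1 else 0)
  else (if i = j ∧ k = 0 then (-1:ℤ) else 0) + epsZ i j k

lemma eps_eq (i j k : Fin 8) : eps i j k = (epsZ i j k : ℝ) := by
  unfold eps epsZ; split_ifs <;> norm_num

lemma structC_eq (i j k : Fin 8) : structC i j k = (structCZ i j k : ℝ) := by
  unfold structC structCZ; rw [eps_eq]; split_ifs <;> push_cast <;> ring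

lemma keyZ : ∀ i j k : Fin 8, structCZ i j k + structCZ k j i
    = if j = 0 ∧ i = k then 2 else 0 := by decide

lemma key (i j k : Fin 8) : structC i j k + structC k j i
    = if j = 0 ∧ i = k then 2 else 0 := by
  rw [structC_eq, structC_eq, ← Int.cast_add, keyZ]
  split_ifs <;> norm_num

lemma inner_oct (x y : Oct) : ⟪x, y⟫ = ∑ i, x i * y i := by
  simp [PiLp.inner_apply, RCLike.inner_apply, mul_comm]

lemma inner_mul (x a y : Oct) : ⟪octMul x a, y⟫
    = ∑ p : Fin 8 × Fin 8 × Fin 8, x p.1 * a p.2.1 * structC p.1 p.2.1 p.2.2 * y p.2.2 := by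
  simp only [inner_oct, octMul, PiLp.toLp_apply, Finset.sum_mul, Fintype.sum_prod_type]
  rw [Finset.sum_comm]
  exact Finset.sum_congr rfl fun i _ => Finset.sum_comm

lemma L (x y a : Oct) : ⟪octMul x a, y⟫ + ⟪octMul y a, x⟫ = 2 * a 0 * ⟪x, y⟫ := by
  have h2 : ⟪octMul y a, x⟫
      = ∑ p : Fin 8 × Fin 8 × Fin 8, x p.1 * a p.2.1 * structC p.2.2 p.2.1 p.1 * y p.2.2 := by
    rw [inner_mul]
    exact Fintype.sum_equiv ⟨fun p => (p.2.2, p.2.1, p.1), fun p => (p.2.2, p.2.1, p.1),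
      fun p => rfl, fun p => rfl⟩ _ _ (fun p => by dsimp; ring)
  rw [inner_mul, h2, ← Finset.sum_add_distrib, inner_oct]
  have hpt : ∀ p : Fin 8 × Fin 8 × Fin 8,
      x p.1 * a p.2.1 * structC p.1 p.2.1 p.2.2 * y p.2.2
        + x p.1 * a p.2.1 * structC p.2.2 p.2.1 p.1 * y p.2.2
      = if p.2.1 = 0 ∧ p.1 = p.2.2 then 2 * a 0 * (x p.1 * y p.2.2) else 0 := by
    intro p
    rw [show x p.1 * a p.2.1 * structC p.1 p.2.1 p.2.2 * y p.2.2
        + x p.1 * a p.2.1 * structC p.2.2 p.2.1 p.1 * y p.2.2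
      = x p.1 * a p.2.1 * y p.2.2 * (structC p.1 p.2.1 p.2.2 + structC p.2.2 p.2.1 p.1)
      from by ring, key]
    split_ifs with h
    · rw [h.1]; ring
    · ring
  rw [Finset.sum_congr rfl fun p _ => hpt p]
  simp [Fintype.sum_prod_type, ite_and, Finset.mul_sum]

/-- For any orthonormal set `{z, u, v, w}` in ℝ⁸,
`⟨X(u,v,w), z⟩ = -⟨X(z,v,w), u⟩`. -/
theorem stmt0 (z u v w : Oct)
    (hz : ‖z‖ = 1) (hu : ‖u‖ = 1) (hv : ‖v‖ = 1) (hw : ‖w‖ = 1)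
    (hzu : ⟪z, u⟫ = 0) (hzv : ⟪z, v⟫ = 0) (hzw : ⟪z, w⟫ = 0)
    (huv : ⟪u, v⟫ = 0) (huw : ⟪u, w⟫ = 0) (hvw : ⟪v, w⟫ = 0) :
    ⟪X3 u v w, z⟫ = -⟪X3 z v w, u⟫ := by
  have hwu : ⟪w, u⟫ = 0 := by rw [real_inner_comm]; exact huw
  have hwz : ⟪w, z⟫ = 0 := by rw [real_inner_comm]; exact hzw
  have huz : ⟪u, z⟫ = 0 := by rw [real_inner_comm]; exact hzu
  simp only [X3, huv, hvw, hzv, hwu, hwz, zero_smul, add_zero, sub_zero,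
    inner_neg_left]
  have hL := L u z (octMul (octConj v) w)
  rw [huz] at hL
  linarith
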